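/- Let T: 𝕋 → 𝕋 be continuous with finite fibers, X ⊂ 𝕋 an infinite rotational proper subset with 0 ∉ X, α = inf X, β = sup X, α' = max{x ∈ X : Tx = β}, β' = min{x ∈ X : Tx = α}. Then T|_X is monotone increasing on X ∩ [α, α'] and on X ∩ [β', β]; moreover T(x) > x for all x ∈ X ∩ [α, α'] and T(x) < x for all x ∈ X ∩ [β', β]. -/
import Mathlib

open Set Filter MeasureTheory

noncomputable def rep (z : UnitAddCircle) : ℝ := (AddCircle.equivIco 1 0 z : ℝ)

def MinimalOn (T : UnitAddCircle → UnitAddCircle) (X : Set UnitAddCircle) : Prop :=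
  ∀ x ∈ X, ∀ y ∈ X, y ∈ closure {z : UnitAddCircle | ∃ n : ℕ, T^[n] x = z}

def PreservesCyclicOrder (T : UnitAddCircle → UnitAddCircle) (X : Set UnitAddCircle) : Prop :=
  ∀ p ∈ X, ∀ q ∈ X, ∀ r ∈ X,
    T p ≠ T q → T q ≠ T r → T r ≠ T p →
    sbtw p q r → sbtw (T p) (T q) (T r)

def IsRotational (T : UnitAddCircle → UnitAddCircle) (X : Set UnitAddCircle) : Prop :=
  IsClosed X ∧ Set.MapsTo T X X ∧ MinimalOn T X ∧ PreservesCyclicOrder T X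

/-! ### auxiliary lemmas -/

lemma rep_coe (z : UnitAddCircle) : ((rep z : ℝ) : UnitAddCircle) = z := by
  have := (AddCircle.equivIco 1 0).symm_apply_apply z
  simpa [AddCircle.equivIco, QuotientAddGroup.equivIcoMod, rep] using this

lemma rep_mem (z : UnitAddCircle) : rep z ∈ Ico (0:ℝ) 1 := by
  have := (AddCircle.equivIco 1 0 z).2
  simpa [rep] using this

lemma coe_rep_eq (r : ℝ) (hr : r ∈ Ico (0:ℝ) 1) : rep ((r : ℝ) : UnitAddCircle) = r := by
  have h2 : r ∈ Ico (0:ℝ) (0+1) := by simpa using hr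
  rw [rep, show AddCircle.equivIco 1 0 (r : UnitAddCircle) = ⟨r, h2⟩ from ?_]
  · rw [Equiv.apply_eq_iff_eq_symm_apply]
    rfl

lemma coe_inj_Ico {r s : ℝ} (hr : r ∈ Ico (0:ℝ) 1) (hs : s ∈ Ico (0:ℝ) 1) :
    ((r : ℝ) : UnitAddCircle) = ((s : ℝ) : UnitAddCircle) ↔ r = s :=
  AddCircle.coe_eq_coe_iff_of_mem_Ico (p := 1) (a := 0)
    (by simpa using hr) (by simpa using hs)

noncomputable def fr (T : UnitAddCircle → UnitAddCircle) (r : ℝ) : ℝ :=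
  rep (T ((r : ℝ) : UnitAddCircle))

def cyc3 (a b c : ℝ) : Prop := (a<b ∧ b<c) ∨ (b<c ∧ c<a) ∨ (c<a ∧ a<b)

lemma toIcoMod_eval (hp : 0 < (1:ℝ)) {a b : ℝ} (ha : a ∈ Ico (0:ℝ) 1) (hb : b ∈ Ico (0:ℝ) 1) :
    toIcoMod hp a b = if a ≤ b then b else b + 1 := by
  split_ifs with h
  · rw [toIcoMod_eq_iff]
    exact ⟨⟨h, by linarith [hb.2, ha.1]⟩, 0, by simp⟩
  · rw [toIcoMod_eq_iff]
    refine ⟨⟨by linarith [hb.1, ha.2], by linarith [not_le.1 h]⟩, -1, by simp⟩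

lemma toIocMod_eval (hp : 0 < (1:ℝ)) {a c : ℝ} (ha : a ∈ Ico (0:ℝ) 1) (hc : c ∈ Ico (0:ℝ) 1) :
    toIocMod hp a c = if a < c then c else c + 1 := by
  split_ifs with h
  · rw [toIocMod_eq_iff]
    exact ⟨⟨h, by linarith [hc.2, ha.1]⟩, 0, by simp⟩
  · rw [toIocMod_eq_iff]
    refine ⟨⟨by linarith [hc.1, ha.2], by linarith [not_lt.1 h]⟩, -1, by simp⟩

lemma btw_coe_eval {a b c : ℝ} (ha : a ∈ Ico (0:ℝ) 1) (hb : b ∈ Ico (0:ℝ) 1)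
    (hc : c ∈ Ico (0:ℝ) 1) :
    btw ((a:ℝ) : UnitAddCircle) ((b:ℝ) : UnitAddCircle) ((c:ℝ) : UnitAddCircle) ↔
      (if a ≤ b then b else b + 1) ≤ (if a < c then c else c + 1) := by
  rw [show (btw ((a:ℝ) : UnitAddCircle) ((b:ℝ) : UnitAddCircle) ((c:ℝ) : UnitAddCircle)) ↔ _ from
    QuotientAddGroup.btw_coe_iff, toIcoMod_eval _ ha hb, toIocMod_eval _ ha hc]

lemma sbtw_coe_of_lt_lt {a b c : ℝ} (ha : a ∈ Ico (0:ℝ) 1) (hb : b ∈ Ico (0:ℝ) 1)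
    (hc : c ∈ Ico (0:ℝ) 1) (h1 : a < b) (h2 : b < c) :
    sbtw ((a:ℝ) : UnitAddCircle) ((b:ℝ) : UnitAddCircle) ((c:ℝ) : UnitAddCircle) := by
  rw [sbtw_iff_btw_not_btw, btw_coe_eval ha hb hc, btw_coe_eval hc hb ha]
  constructor
  · rw [if_pos h1.le, if_pos (h1.trans h2)]
    exact h2.le
  · rw [if_neg (not_le.2 h2), if_neg (not_lt.2 (h1.trans h2).le)]
    intro h
    linarith

lemma cyc3_total {a b c : ℝ} (hab : a ≠ b) (hbc : b ≠ c) (hca : c ≠ a) :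
    cyc3 a b c ∨ cyc3 c b a := by
  rcases lt_or_gt_of_ne hab with h1|h1 <;> rcases lt_or_gt_of_ne hbc with h2|h2 <;>
    rcases lt_or_gt_of_ne hca with h3|h3 <;> simp only [cyc3] <;>
    first
      | (exfalso; linarith)
      | tauto

lemma sbtw_of_cyc3 {a b c : ℝ} (ha : a ∈ Ico (0:ℝ) 1) (hb : b ∈ Ico (0:ℝ) 1)
    (hc : c ∈ Ico (0:ℝ) 1) (h : cyc3 a b c) :
    sbtw ((a:ℝ) : UnitAddCircle) ((b:ℝ) : UnitAddCircle) ((c:ℝ) : UnitAddCircle) := by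
  rcases h with ⟨h1,h2⟩|⟨h1,h2⟩|⟨h1,h2⟩
  · exact sbtw_coe_of_lt_lt ha hb hc h1 h2
  · exact (sbtw_coe_of_lt_lt hb hc ha h1 h2).cyclic_right
  · exact (sbtw_coe_of_lt_lt hc ha hb h1 h2).cyclic_left

lemma cyc3_of_sbtw {a b c : ℝ} (ha : a ∈ Ico (0:ℝ) 1) (hb : b ∈ Ico (0:ℝ) 1)
    (hc : c ∈ Ico (0:ℝ) 1) (hab : a ≠ b) (hbc : b ≠ c) (hca : c ≠ a)
    (h : sbtw ((a:ℝ) : UnitAddCircle) ((b:ℝ) : UnitAddCircle) ((c:ℝ) : UnitAddCircle)) :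
    cyc3 a b c := by
  rcases cyc3_total hab hbc hca with h'|h'
  · exact h'
  · exact absurd ((sbtw_of_cyc3 hc hb ha h').btw) h.not_btw

lemma cyc3_map (T : UnitAddCircle → UnitAddCircle) (X : Set UnitAddCircle)
    (hpres : PreservesCyclicOrder T X) {a b c : ℝ}
    (ha : a ∈ Ico (0:ℝ) 1) (hb : b ∈ Ico (0:ℝ) 1) (hc : c ∈ Ico (0:ℝ) 1)
    (haX : ((a:ℝ) : UnitAddCircle) ∈ X) (hbX : ((b:ℝ) : UnitAddCircle) ∈ X)
    (hcX : ((c:ℝ) : UnitAddCircle) ∈ X)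
    (h : cyc3 a b c)
    (hab : fr T a ≠ fr T b) (hbc : fr T b ≠ fr T c) (hca : fr T c ≠ fr T a) :
    cyc3 (fr T a) (fr T b) (fr T c) := by
  have hTab : T ((a:ℝ) : UnitAddCircle) ≠ T ((b:ℝ) : UnitAddCircle) :=
    fun e => hab (congrArg rep e)
  have hTbc : T ((b:ℝ) : UnitAddCircle) ≠ T ((c:ℝ) : UnitAddCircle) :=
    fun e => hbc (congrArg rep e)
  have hTca : T ((c:ℝ) : UnitAddCircle) ≠ T ((a:ℝ) : UnitAddCircle) :=
    fun e => hca (congrArg rep e)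
  have hs := hpres _ haX _ hbX _ hcX hTab hTbc hTca (sbtw_of_cyc3 ha hb hc h)
  rw [show T ((a:ℝ) : UnitAddCircle) = ((fr T a : ℝ) : UnitAddCircle) from (rep_coe _).symm,
    show T ((b:ℝ) : UnitAddCircle) = ((fr T b : ℝ) : UnitAddCircle) from (rep_coe _).symm,
    show T ((c:ℝ) : UnitAddCircle) = ((fr T c : ℝ) : UnitAddCircle) from (rep_coe _).symm] at hs
  exact cyc3_of_sbtw (rep_mem _) (rep_mem _) (rep_mem _) hab hbc hca hs

lemma iter_mem {T : UnitAddCircle → UnitAddCircle} {X : Set UnitAddCircle}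
    (hmaps : Set.MapsTo T X X) : ∀ n, ∀ x ∈ X, T^[n] x ∈ X := by
  intro n
  induction n with
  | zero => intro x hx; simpa using hx
  | succ n ih =>
    intro x hx
    rw [Function.iterate_succ_apply]
    exact ih _ (hmaps hx)

lemma no_periodic {T : UnitAddCircle → UnitAddCircle} {X : Set UnitAddCircle}
    (hmaps : Set.MapsTo T X X) (hmin : MinimalOn T X) (hinf : X.Infinite)
    {x : UnitAddCircle} (hx : x ∈ X) {m : ℕ} (hm : 0 < m) (hper : T^[m] x = x) : False := by
  have key : ∀ n, ∃ k < m, T^[n] x = T^[k] x := by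
    intro n
    induction n using Nat.strong_induction_on with
    | _ n ih =>
      rcases lt_or_ge n m with h|h
      · exact ⟨n, h, rfl⟩
      · obtain ⟨k, hk, he⟩ := ih (n - m) (by omega)
        refine ⟨k, hk, ?_⟩
        have h1 : T^[n] x = T^[n-m] (T^[m] x) := by
          rw [← Function.iterate_add_apply]
          congr 1
          omega
        rw [h1, hper, he]
  have hSfin : {z : UnitAddCircle | ∃ n, T^[n] x = z}.Finite := by
    apply Set.Finite.subset (Set.Finite.image (fun k => T^[k] x) (Set.finite_Iio m))
    rintro z ⟨n, rfl⟩
    obtain ⟨k, hk, he⟩ := key n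
    exact ⟨k, hk, he.symm⟩
  have hXsub : X ⊆ {z : UnitAddCircle | ∃ n, T^[n] x = z} := by
    intro y hy
    have := hmin x hx y hy
    rwa [hSfin.isClosed.closure_eq] at this
  exact hinf (hSfin.subset hXsub)

theorem monotone_on_edges
    (T : UnitAddCircle → UnitAddCircle) (hT : Continuous T)
    (hfib : ∀ y : UnitAddCircle, (T ⁻¹' {y}).Finite)
    (X : Set UnitAddCircle) (hrot : IsRotational T X)
    (hinf : X.Infinite) (hproper : X ≠ Set.univ)
    (h0 : (0 : UnitAddCircle) ∉ X)
    (Xr : Set ℝ)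
    (hXr : Xr = {r : ℝ | r ∈ Set.Ico (0:ℝ) 1 ∧ ((r : ℝ) : UnitAddCircle) ∈ X})
    (α β : ℝ) (hα : α = sInf Xr) (hβ : β = sSup Xr)
    (α' β' : ℝ)
    (hα' : α' = sSup {r ∈ Xr | T ((r : ℝ) : UnitAddCircle) = ((β : ℝ) : UnitAddCircle)})
    (hβ' : β' = sInf {r ∈ Xr | T ((r : ℝ) : UnitAddCircle) = ((α : ℝ) : UnitAddCircle)}) :
    (∀ r ∈ Xr, ∀ s ∈ Xr, α ≤ r → r ≤ s → s ≤ α' →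
        rep (T ((r : ℝ) : UnitAddCircle)) ≤ rep (T ((s : ℝ) : UnitAddCircle))) ∧
    (∀ r ∈ Xr, ∀ s ∈ Xr, β' ≤ r → r ≤ s → s ≤ β →
        rep (T ((r : ℝ) : UnitAddCircle)) ≤ rep (T ((s : ℝ) : UnitAddCircle))) ∧
    (∀ r ∈ Xr, α ≤ r → r ≤ α' → r < rep (T ((r : ℝ) : UnitAddCircle))) ∧
    (∀ r ∈ Xr, β' ≤ r → r ≤ β → rep (T ((r : ℝ) : UnitAddCircle)) < r) := by
  obtain ⟨hXcl, hmaps, hmin, hpres⟩ := hrot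
  have hXmem : ∀ {r : ℝ}, r ∈ Xr ↔ r ∈ Ico (0:ℝ) 1 ∧ ((r:ℝ):UnitAddCircle) ∈ X := by
    intro r; rw [hXr]; exact Iff.rfl
  have hIcoX : ∀ r ∈ Xr, r ∈ Ico (0:ℝ) 1 := fun r hr => (hXmem.1 hr).1
  have hX : ∀ r ∈ Xr, ((r:ℝ):UnitAddCircle) ∈ X := fun r hr => (hXmem.1 hr).2
  have hrepX : ∀ x ∈ X, rep x ∈ Xr := fun x hx =>
    hXmem.2 ⟨rep_mem x, by rw [rep_coe]; exact hx⟩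
  obtain ⟨x₀, hx₀X⟩ := hinf.nonempty
  have hXrne : Xr.Nonempty := ⟨rep x₀, hrepX _ hx₀X⟩
  have hbddB : BddBelow Xr := ⟨0, fun r hr => (hIcoX r hr).1⟩
  have hbddA : BddAbove Xr := ⟨1, fun r hr => (hIcoX r hr).2.le⟩
  have hcont : Continuous (fun r : ℝ => ((r : ℝ) : UnitAddCircle)) :=
    AddCircle.continuous_mk' 1
  have hpos : ∀ r ∈ Xr, 0 < r := by
    intro r hr
    rcases (hIcoX r hr).1.lt_or_eq with h|h
    · exact h
    · exfalso
      apply h0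
      have : ((0:ℝ) : UnitAddCircle) = (0 : UnitAddCircle) := by norm_cast
      rw [← this, h]
      exact hX r hr
  have hXrcl : IsClosed Xr := by
    have hXeq : Xr = Icc (0:ℝ) 1 ∩ ((fun r : ℝ => ((r : ℝ) : UnitAddCircle)) ⁻¹' X) := by
      ext r
      constructor
      · intro hr
        exact ⟨⟨(hIcoX r hr).1, (hIcoX r hr).2.le⟩, hX r hr⟩
      · rintro ⟨⟨h0', h1'⟩, hrX⟩
        refine hXmem.2 ⟨⟨h0', lt_of_le_of_ne h1' ?_⟩, hrX⟩
        intro e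
        apply h0
        have he : ((r:ℝ) : UnitAddCircle) = 0 := by
          rw [e]; exact AddCircle.coe_period (p := (1:ℝ))
        simp only [Set.mem_preimage] at hrX
        rwa [he] at hrX
    rw [hXeq]
    exact isClosed_Icc.inter (IsClosed.preimage hcont hXcl)
  have hXrcomp : IsCompact Xr :=
    isCompact_Icc.of_isClosed_subset hXrcl
      (fun r hr => ⟨(hIcoX r hr).1, (hIcoX r hr).2.le⟩)
  have hαmem : α ∈ Xr := hα ▸ hXrcl.csInf_mem hXrne hbddB
  have hβmem : β ∈ Xr := hβ ▸ hXrcl.csSup_mem hXrne hbddA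
  have hαle : ∀ r ∈ Xr, α ≤ r := fun r hr => hα ▸ csInf_le hbddB hr
  have hleβ : ∀ r ∈ Xr, r ≤ β := fun r hr => hβ ▸ le_csSup hbddA hr
  have hXcomp : IsCompact X := hXcl.isCompact
  have hsurj : ∀ y ∈ X, ∃ x ∈ X, T x = y := by
    intro y hy
    obtain ⟨x, hxX, hxy⟩ : ∃ x ∈ X, x ≠ y := by
      by_contra h
      push_neg at h
      exact hinf ((Set.finite_singleton y).subset (fun z hz => h z hz))
    have horb : {z : UnitAddCircle | ∃ n, T^[n] x = z} ⊆ {x} ∪ T '' X := by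
      rintro z ⟨n, rfl⟩
      cases n with
      | zero => exact Or.inl rfl
      | succ n =>
        exact Or.inr ⟨T^[n] x, iter_mem hmaps n x hxX,
          (Function.iterate_succ_apply' T n x).symm⟩
    have hcl : closure {z : UnitAddCircle | ∃ n, T^[n] x = z} ⊆ {x} ∪ T '' X :=
      closure_minimal horb (isClosed_singleton.union (hXcomp.image hT).isClosed)
    rcases hcl (hmin x hxX y hy) with h|⟨w, hw, hwy⟩
    · exact absurd h.symm hxy
    · exact ⟨w, hw, hwy⟩
  have hSbcl : IsClosed {r ∈ Xr | T ((r:ℝ):UnitAddCircle) = ((β:ℝ):UnitAddCircle)} := by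
    have : {r ∈ Xr | T ((r:ℝ):UnitAddCircle) = ((β:ℝ):UnitAddCircle)} =
        Xr ∩ ((fun r : ℝ => T ((r:ℝ):UnitAddCircle)) ⁻¹' {((β:ℝ):UnitAddCircle)}) := rfl
    rw [this]
    exact hXrcl.inter (IsClosed.preimage (hT.comp hcont) isClosed_singleton)
  have hSacl : IsClosed {r ∈ Xr | T ((r:ℝ):UnitAddCircle) = ((α:ℝ):UnitAddCircle)} := by
    have : {r ∈ Xr | T ((r:ℝ):UnitAddCircle) = ((α:ℝ):UnitAddCircle)} =
        Xr ∩ ((fun r : ℝ => T ((r:ℝ):UnitAddCircle)) ⁻¹' {((α:ℝ):UnitAddCircle)}) := rfl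
    rw [this]
    exact hXrcl.inter (IsClosed.preimage (hT.comp hcont) isClosed_singleton)
  have hSne : ∀ z ∈ X, ({r ∈ Xr | T ((r:ℝ):UnitAddCircle) = z}).Nonempty := by
    intro z hz
    obtain ⟨x, hxX, hxz⟩ := hsurj z hz
    exact ⟨rep x, hrepX x hxX, by rw [rep_coe]; exact hxz⟩
  have hα'mem : α' ∈ {r ∈ Xr | T ((r:ℝ):UnitAddCircle) = ((β:ℝ):UnitAddCircle)} := by
    rw [hα']
    exact hSbcl.csSup_mem (hSne _ (hX β hβmem))
      (hbddA.mono (fun r hr => hr.1))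
  have hβ'mem : β' ∈ {r ∈ Xr | T ((r:ℝ):UnitAddCircle) = ((α:ℝ):UnitAddCircle)} := by
    rw [hβ']
    exact hSacl.csInf_mem (hSne _ (hX α hαmem))
      (hbddB.mono (fun r hr => hr.1))
  have hα'Xr : α' ∈ Xr := hα'mem.1
  have hβ'Xr : β' ∈ Xr := hβ'mem.1
  have hTα' : T ((α':ℝ):UnitAddCircle) = ((β:ℝ):UnitAddCircle) := hα'mem.2
  have hTβ' : T ((β':ℝ):UnitAddCircle) = ((α:ℝ):UnitAddCircle) := hβ'mem.2
  have hfco : ∀ r : ℝ, ((fr T r : ℝ) : UnitAddCircle) = T ((r:ℝ):UnitAddCircle) :=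
    fun r => rep_coe _
  have hfXr : ∀ r ∈ Xr, fr T r ∈ Xr := fun r hr => hrepX _ (hmaps (hX r hr))
  have hfrIco : ∀ r : ℝ, fr T r ∈ Ico (0:ℝ) 1 := fun r => rep_mem _
  have hfeq : ∀ (r : ℝ), ∀ z ∈ Ico (0:ℝ) 1,
      (T ((r:ℝ):UnitAddCircle) = ((z:ℝ):UnitAddCircle) ↔ fr T r = z) := by
    intro r z hz
    rw [← hfco r, coe_inj_Ico (hfrIco r) hz]
  have hfrα' : fr T α' = β := (hfeq α' β (hIcoX β hβmem)).1 hTα'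
  have hfrβ' : fr T β' = α := (hfeq β' α (hIcoX α hαmem)).1 hTβ'
  have hle_α' : ∀ r ∈ Xr, fr T r = β → r ≤ α' := by
    intro r hr he
    rw [hα']
    exact le_csSup (hbddA.mono (fun x hx => hx.1))
      ⟨hr, (hfeq r β (hIcoX β hβmem)).2 he⟩
  have hβ'_le : ∀ r ∈ Xr, fr T r = α → β' ≤ r := by
    intro r hr he
    rw [hβ']
    exact csInf_le (hbddB.mono (fun x hx => hx.1))
      ⟨hr, (hfeq r α (hIcoX α hαmem)).2 he⟩
  have hnofix : ∀ r ∈ Xr, fr T r ≠ r := by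
    intro r hr he
    have hfix : T ((r:ℝ):UnitAddCircle) = ((r:ℝ):UnitAddCircle) := by
      rw [← hfco r, he]
    exact no_periodic hmaps hmin hinf (hX r hr) one_pos (by simpa using hfix)
  have hP : ∀ a ∈ Xr, ∀ b ∈ Xr, ∀ c ∈ Xr, cyc3 a b c → fr T a ≠ fr T b →
      fr T b ≠ fr T c → fr T c ≠ fr T a → cyc3 (fr T a) (fr T b) (fr T c) :=
    fun a ha b hb c hc => cyc3_map T X hpres (hIcoX a ha) (hIcoX b hb) (hIcoX c hc)
      (hX a ha) (hX b hb) (hX c hc)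
  have hfin : ∀ z₁ z₂ : UnitAddCircle,
      {r ∈ Xr | T ((r:ℝ):UnitAddCircle) = z₁ ∨ T ((r:ℝ):UnitAddCircle) = z₂}.Finite := by
    intro z₁ z₂
    apply Set.Finite.of_finite_image (f := fun r : ℝ => ((r:ℝ):UnitAddCircle))
    · apply Set.Finite.subset ((hfib z₁).union (hfib z₂))
      rintro w ⟨r, ⟨hrX, h⟩, rfl⟩
      rcases h with h|h
      · exact Or.inl h
      · exact Or.inr h
    · intro r hr s hs he
      exact (coe_inj_Ico (hIcoX r hr.1) (hIcoX s hs.1)).1 he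
  have hacc : ∀ t ∈ Xr, ∀ ε : ℝ, 0 < ε → ∃ s ∈ Xr, s ≠ t ∧ |s - t| < ε := by
    intro t htX ε hε
    by_contra hcon
    push_neg at hcon
    have hiso : ∀ s ∈ Xr, |s - t| < ε → s = t := by
      intro s hs habs
      by_contra hne
      exact absurd habs (not_lt.2 (hcon s hs hne))
    have htpos : 0 < t := hpos t htX
    have ht1 : t < 1 := (hIcoX t htX).2
    set δ := min ε (min t (1 - t)) with hδ
    have hδpos : 0 < δ := lt_min hε (lt_min htpos (by linarith))
    have hδt : δ ≤ t := (min_le_right _ _).trans (min_le_left _ _)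
    have hδ1 : δ ≤ 1 - t := (min_le_right _ _).trans (min_le_right _ _)
    have hδε : δ ≤ ε := min_le_left _ _
    have hUopen : IsOpen ((fun r : ℝ => ((r:ℝ):UnitAddCircle)) '' Ioo (t-δ) (t+δ)) :=
      QuotientAddGroup.isOpenMap_coe _ isOpen_Ioo
    have hmemU : ((t:ℝ):UnitAddCircle) ∈ (fun r : ℝ => ((r:ℝ):UnitAddCircle)) '' Ioo (t-δ) (t+δ) :=
      ⟨t, ⟨by linarith, by linarith⟩, rfl⟩
    have hUX : ∀ z, z ∈ ((fun r : ℝ => ((r:ℝ):UnitAddCircle)) '' Ioo (t-δ) (t+δ)) → z ∈ X →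
        z = ((t:ℝ):UnitAddCircle) := by
      rintro z ⟨s, hsI, rfl⟩ hzX
      have hsIco : s ∈ Ico (0:ℝ) 1 := ⟨by cases hsI; linarith, by cases hsI; linarith⟩
      have hsX : s ∈ Xr := hXmem.2 ⟨hsIco, hzX⟩
      have : s = t := hiso s hsX (by rw [abs_sub_lt_iff]; cases hsI; constructor <;> linarith)
      rw [this]
    have hTt : T ((t:ℝ):UnitAddCircle) ∈ X := hmaps (hX t htX)
    have hclo := hmin _ hTt _ (hX t htX)
    rw [mem_closure_iff] at hclo
    obtain ⟨z, hzU, hzS⟩ := hclo _ hUopen hmemU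
    obtain ⟨n, hn⟩ := hzS
    have hzX : z ∈ X := by rw [← hn]; exact iter_mem hmaps n _ hTt
    have hz : z = ((t:ℝ):UnitAddCircle) := hUX z hzU hzX
    have hper : T^[n+1] ((t:ℝ):UnitAddCircle) = ((t:ℝ):UnitAddCircle) := by
      rw [Function.iterate_succ_apply, hn, hz]
    exact no_periodic hmaps hmin hinf (hX t htX) (Nat.succ_pos n) hper
  have htrap : ∀ u v : ℝ, ∀ y₀ ∈ Xr, u ≤ y₀ → y₀ ≤ v →
      (∀ s ∈ Xr, u ≤ s → s ≤ v → u ≤ fr T s ∧ fr T s ≤ v) →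
      ∀ w ∈ Xr, u ≤ w ∧ w ≤ v := by
    intro u v y₀ hy₀ hu hv hstep w hw
    have hKcomp : IsCompact (Xr ∩ Icc u v) := hXrcomp.inter_right isClosed_Icc
    have hZcl : IsClosed ((fun r : ℝ => ((r:ℝ):UnitAddCircle)) '' (Xr ∩ Icc u v)) :=
      (hKcomp.image hcont).isClosed
    have horbit : ∀ n, T^[n] ((y₀:ℝ):UnitAddCircle) ∈
        (fun r : ℝ => ((r:ℝ):UnitAddCircle)) '' (Xr ∩ Icc u v) := by
      intro n
      induction n with
      | zero => exact ⟨y₀, ⟨hy₀, hu, hv⟩, rfl⟩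
      | succ n ih =>
        obtain ⟨k, ⟨hkX, hk1, hk2⟩, he⟩ := ih
        rw [Function.iterate_succ_apply', ← he]
        obtain ⟨h1', h2'⟩ := hstep k hkX hk1 hk2
        exact ⟨fr T k, ⟨hfXr k hkX, h1', h2'⟩, hfco k⟩
    have hwZ : ((w:ℝ):UnitAddCircle) ∈
        (fun r : ℝ => ((r:ℝ):UnitAddCircle)) '' (Xr ∩ Icc u v) :=
      closure_minimal (by rintro z ⟨n, rfl⟩; exact horbit n) hZcl
        (hmin _ (hX y₀ hy₀) _ (hX w hw))
    obtain ⟨k, ⟨hkX, h1, h2⟩, he⟩ := hwZ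
    have hkw : k = w := (coe_inj_Ico (hIcoX k hkX) (hIcoX w hw)).1 he
    rw [hkw] at h1 h2
    exact ⟨h1, h2⟩
  have hαα' : α ≤ α' := hαle α' hα'Xr
  have hα'β : α' ≤ β := hleβ α' hα'Xr
  have hαβ' : α ≤ β' := hαle β' hβ'Xr
  have hβ'β : β' ≤ β := hleβ β' hβ'Xr
  have hα'ltβ : α' < β := lt_of_le_of_ne hα'β
    (fun e => hnofix α' hα'Xr (hfrα'.trans e.symm))
  have hαltβ' : α < β' := lt_of_le_of_ne hαβ'
    (fun e => hnofix β' hβ'Xr (hfrβ'.trans e))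
  -- given a finite set not containing a point, there is a punctured ball avoiding it
  have hball : ∀ (G' : Set ℝ), G'.Finite → ∀ t : ℝ, t ∉ G' →
      ∃ ε₁ > 0, ∀ y ∈ G', ¬ |y - t| < ε₁ := by
    intro G' hG'fin t htG'
    have hopen : IsOpen G'ᶜ := hG'fin.isClosed.isOpen_compl
    obtain ⟨ε₁, hε₁, hsub⟩ := Metric.isOpen_iff.1 hopen t htG'
    refine ⟨ε₁, hε₁, fun y hy habs => ?_⟩
    exact hsub (show y ∈ Metric.ball t ε₁ by rwa [Metric.mem_ball, Real.dist_eq]) hy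
  have hdeg1 : ∀ r ∈ Xr, ∀ s ∈ Xr, r < s → s ≤ α' → fr T r = β → fr T s < β → False := by
    intro r hr s hs hrs hsα' hfrr hfss
    set c := fr T s with hc
    have hcXr : c ∈ Xr := hfXr s hs
    have hslt : s < α' := by
      rcases eq_or_lt_of_le hsα' with rfl|h
      · exact absurd hfrα' (ne_of_lt hfss)
      · exact h
    have hG : ∀ t ∈ Xr, α' < t →
        (T ((t:ℝ):UnitAddCircle) = ((β:ℝ):UnitAddCircle) ∨
         T ((t:ℝ):UnitAddCircle) = ((c:ℝ):UnitAddCircle)) := by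
      intro t ht hα't
      by_contra hcon
      push_neg at hcon
      obtain ⟨h1, h2⟩ := hcon
      set d := fr T t with hd
      have hdβ : d ≠ β := fun e => h1 ((hfeq t β (hIcoX β hβmem)).2 e)
      have hdc : d ≠ c := fun e => h2 ((hfeq t c (hIcoX c hcXr)).2 e)
      have hdXr : d ∈ Xr := hfXr t ht
      have hdltβ : d < β := lt_of_le_of_ne (hleβ d hdXr) hdβ
      have hcyc1 := hP r hr s hs t ht (Or.inl ⟨hrs, lt_of_le_of_lt hsα' hα't⟩)
        (by rw [hfrr, ← hc]; exact (ne_of_lt hfss).symm)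
        (by rw [← hc, ← hd]; exact fun e => hdc e.symm)
        (by rw [← hd, hfrr]; exact hdβ)
      rw [hfrr, ← hc, ← hd] at hcyc1
      have hcd : c < d := by
        rcases hcyc1 with ⟨h1',h2'⟩|⟨h1',h2'⟩|⟨h1',h2'⟩ <;> first | exact h1' | linarith
      have hcyc2 := hP s hs α' hα'Xr t ht (Or.inl ⟨hslt, hα't⟩)
        (by rw [← hc, hfrα']; exact ne_of_lt hfss)
        (by rw [hfrα', ← hd]; exact fun e => hdβ e.symm)
        (by rw [← hd, ← hc]; exact hdc)
      rw [← hc, hfrα', ← hd] at hcyc2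
      rcases hcyc2 with ⟨h1',h2'⟩|⟨h1',h2'⟩|⟨h1',h2'⟩ <;> linarith
    -- hence Xr ∩ (α', β] is finite, so β is isolated: contradiction
    have hGfin : ({x ∈ Xr | T ((x:ℝ):UnitAddCircle) = ((β:ℝ):UnitAddCircle) ∨
        T ((x:ℝ):UnitAddCircle) = ((c:ℝ):UnitAddCircle)} \ {β}).Finite :=
      (hfin _ _).subset diff_subset
    obtain ⟨ε₁, hε₁, hb⟩ := hball _ hGfin β (fun h => h.2 rfl)
    have hεpos : 0 < min ε₁ (β - α') := lt_min hε₁ (by linarith)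
    obtain ⟨s', hs'X, hs'ne, hs'lt⟩ := hacc β hβmem _ hεpos
    have hs'leβ : s' ≤ β := hleβ s' hs'X
    have habs : |s' - β| = β - s' := by
      rw [abs_sub_comm]
      exact abs_of_nonneg (by linarith)
    have hα's' : α' < s' := by
      have : |s' - β| < β - α' := lt_of_lt_of_le hs'lt (min_le_right _ _)
      rw [habs] at this
      linarith
    exact hb s' ⟨⟨hs'X, hG s' hs'X hα's'⟩, hs'ne⟩
      (lt_of_lt_of_le hs'lt (min_le_left _ _))
  have hdeg2 : ∀ r ∈ Xr, ∀ s ∈ Xr, r < s → β' ≤ r → fr T s = α → α < fr T r → False := by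
    intro r hr s hs hrs hβ'r hfss hfrr
    set c := fr T r with hc
    have hcXr : c ∈ Xr := hfXr r hr
    have hβ'lt : β' < r := by
      rcases eq_or_lt_of_le hβ'r with rfl|h
      · exact absurd hfrβ' (ne_of_gt hfrr)
      · exact h
    have hG : ∀ t ∈ Xr, t < β' →
        (T ((t:ℝ):UnitAddCircle) = ((α:ℝ):UnitAddCircle) ∨
         T ((t:ℝ):UnitAddCircle) = ((c:ℝ):UnitAddCircle)) := by
      intro t ht htβ'
      by_contra hcon
      push_neg at hcon
      obtain ⟨h1, h2⟩ := hcon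
      set d := fr T t with hd
      have hdα : d ≠ α := fun e => h1 ((hfeq t α (hIcoX α hαmem)).2 e)
      have hdc : d ≠ c := fun e => h2 ((hfeq t c (hIcoX c hcXr)).2 e)
      have hdXr : d ∈ Xr := hfXr t ht
      have hdgtα : α < d := lt_of_le_of_ne (hαle d hdXr) (fun e => hdα e.symm)
      have hcyc1 := hP t ht β' hβ'Xr r hr (Or.inl ⟨htβ', hβ'lt⟩)
        (by rw [← hd, hfrβ']; exact hdα)
        (by rw [hfrβ', ← hc]; exact ne_of_lt hfrr)
        (by rw [← hc, ← hd]; exact fun e => hdc e.symm)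
      rw [← hd, hfrβ', ← hc] at hcyc1
      have hcd : c < d := by
        rcases hcyc1 with ⟨h1',h2'⟩|⟨h1',h2'⟩|⟨h1',h2'⟩ <;> first | exact h2' | linarith
      have hcyc2 := hP t ht r hr s hs (Or.inl ⟨lt_of_lt_of_le htβ' hβ'r, hrs⟩)
        (by rw [← hd, ← hc]; exact hdc)
        (by rw [← hc, hfss]; exact ne_of_gt hfrr)
        (by rw [hfss, ← hd]; exact fun e => hdα e.symm)
      rw [← hd, ← hc, hfss] at hcyc2
      rcases hcyc2 with ⟨h1',h2'⟩|⟨h1',h2'⟩|⟨h1',h2'⟩ <;> linarith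
    have hGfin : ({x ∈ Xr | T ((x:ℝ):UnitAddCircle) = ((α:ℝ):UnitAddCircle) ∨
        T ((x:ℝ):UnitAddCircle) = ((c:ℝ):UnitAddCircle)} \ {α}).Finite :=
      (hfin _ _).subset diff_subset
    obtain ⟨ε₁, hε₁, hb⟩ := hball _ hGfin α (fun h => h.2 rfl)
    have hεpos : 0 < min ε₁ (β' - α) := lt_min hε₁ (by linarith)
    obtain ⟨s', hs'X, hs'ne, hs'lt⟩ := hacc α hαmem _ hεpos
    have hs'geα : α ≤ s' := hαle s' hs'X
    have habs : |s' - α| = s' - α := abs_of_nonneg (by linarith)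
    have hs'β' : s' < β' := by
      have : |s' - α| < β' - α := lt_of_lt_of_le hs'lt (min_le_right _ _)
      rw [habs] at this
      linarith
    exact hb s' ⟨⟨hs'X, hG s' hs'X hs'β'⟩, hs'ne⟩
      (lt_of_lt_of_le hs'lt (min_le_left _ _))
  have hmono1 : ∀ r ∈ Xr, ∀ s ∈ Xr, α ≤ r → r ≤ s → s ≤ α' → fr T r ≤ fr T s := by
    intro r hr s hs hαr hrs hsα'
    rcases eq_or_lt_of_le hrs with rfl|hlt
    · exact le_refl _
    by_contra hcon
    push_neg at hcon
    have hfrβ : fr T r ≤ β := hleβ _ (hfXr r hr)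
    rcases eq_or_lt_of_le hfrβ with he|hltβ
    · exact hdeg1 r hr s hs hlt hsα' he (lt_of_lt_of_le hcon (le_of_eq he))
    · have hsβ : fr T s < β := hcon.trans hltβ
      have hslt : s < α' := by
        rcases eq_or_lt_of_le hsα' with rfl|h
        · exact absurd hfrα' (ne_of_lt hsβ)
        · exact h
      have hcyc := hP r hr s hs α' hα'Xr (Or.inl ⟨hlt, hslt⟩)
        (ne_of_gt hcon)
        (by rw [hfrα']; exact ne_of_lt hsβ)
        (by rw [hfrα']; exact ne_of_gt hltβ)
      rw [hfrα'] at hcyc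
      rcases hcyc with ⟨h1,h2⟩|⟨h1,h2⟩|⟨h1,h2⟩ <;> linarith
  have hmono2 : ∀ r ∈ Xr, ∀ s ∈ Xr, β' ≤ r → r ≤ s → s ≤ β → fr T r ≤ fr T s := by
    intro r hr s hs hβ'r hrs hsβ
    rcases eq_or_lt_of_le hrs with rfl|hlt
    · exact le_refl _
    by_contra hcon
    push_neg at hcon
    have hαfs : α ≤ fr T s := hαle _ (hfXr s hs)
    rcases eq_or_lt_of_le hαfs with he|hltα
    · exact hdeg2 r hr s hs hlt hβ'r he.symm (lt_of_le_of_lt (le_of_eq he) hcon)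
    · have hβ'lt : β' < r := by
        rcases eq_or_lt_of_le hβ'r with rfl|h
        · exfalso
          rw [hfrβ'] at hcon
          linarith
        · exact h
      have hcyc := hP β' hβ'Xr r hr s hs (Or.inl ⟨hβ'lt, hlt⟩)
        (by rw [hfrβ']; exact ne_of_lt (lt_trans hltα hcon))
        (ne_of_gt hcon)
        (by rw [hfrβ']; exact ne_of_gt hltα)
      rw [hfrβ'] at hcyc
      rcases hcyc with ⟨h1,h2⟩|⟨h1,h2⟩|⟨h1,h2⟩ <;> linarith
  have hstrict1 : ∀ r ∈ Xr, α ≤ r → r ≤ α' → r < fr T r := by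
    intro r hr hαr hrα'
    rcases lt_trichotomy r (fr T r) with h|h|h
    · exact h
    · exact absurd h.symm (hnofix r hr)
    · exfalso
      have hrltα' : r < α' := by
        rcases eq_or_lt_of_le hrα' with rfl|h'
        · rw [hfrα'] at h
          linarith
        · exact h'
      have hb := htrap α r r hr hαr (le_refl r)
        (fun s hsX hαs hsr =>
          ⟨hαle _ (hfXr s hsX), le_trans (hmono1 s hsX r hr hαs hsr hrα') h.le⟩)
        α' hα'Xr
      linarith [hb.2]
  have hstrict2 : ∀ r ∈ Xr, β' ≤ r → r ≤ β → fr T r < r := by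
    intro r hr hβ'r hrβ
    rcases lt_trichotomy (fr T r) r with h|h|h
    · exact h
    · exact absurd h (hnofix r hr)
    · exfalso
      have hβ'lt : β' < r := by
        rcases eq_or_lt_of_le hβ'r with he|h'
        · have hx : fr T r = α := by rw [← he]; exact hfrβ'
          rw [hx] at h
          linarith [hαle r hr]
        · exact h'
      have hb := htrap r β β hβmem hrβ (le_refl β)
        (fun s hsX hrs hsβ =>
          ⟨le_trans h.le (hmono2 r hr s hsX hβ'r hrs hsβ), hleβ _ (hfXr s hsX)⟩)
        β' hβ'Xr
      linarith [hb.1]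
  exact ⟨hmono1, hmono2, hstrict1, hstrict2⟩
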